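/- If a Schauder basis B of a Banach space X has Property (Q*) with constant C, then B is C-suppression unconditional and has Property (A) with constant C. Conversely, if B is K-suppression unconditional and has Property (A) with constant C, then B has Property (Q*) with constant KC. -/

import Mathlib

open Filter

/-- The vector with finitely many coefficients `c` with respect to the sequence `(e_n)`. -/
noncomputable def vec {X : Type*} [NormedAddCommGroup X] [NormedSpace ℝ X]
    (e : ℕ → X) (c : ℕ →₀ ℝ) : X := ∑ n ∈ c.support, c n • e n

/-- Property (Q*) with constant `C`: `‖x + z‖ ≤ C ‖x + y‖` for all finitely supported
`x, z, y` with pairwise disjoint supports, `max{‖x̃‖_∞, ‖z̃‖_∞} ≤ 1` and `y ∈ Γ_z`,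
where `y ∈ Γ_z` means `|supp(z)| ≤ |{n : |e*_n(y)| = 1}|`. -/
def PropQstar {X : Type*} [NormedAddCommGroup X] [NormedSpace ℝ X] (e : ℕ → X) (C : ℝ) : Prop :=
  ∀ (c z y : ℕ →₀ ℝ), Disjoint c.support z.support → Disjoint c.support y.support →
    Disjoint z.support y.support → (∀ n, |c n| ≤ 1) → (∀ n, |z n| ≤ 1) →
    z.support.card ≤ (y.support.filter fun n => |y n| = 1).card →
    ‖vec e c + vec e z‖ ≤ C * ‖vec e c + vec e y‖

/-- Property (A) with constant `C`: `‖x + 1_{εA}‖ ≤ C ‖x + 1_{ε'B}‖` for all signs `ε, ε'`,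
disjoint finite `A, B` with `|A| = |B|`, and finitely supported `x` with `‖x̃‖_∞ ≤ 1` and
`supp(x) ∩ (A ∪ B) = ∅`. -/
def PropA {X : Type*} [NormedAddCommGroup X] [NormedSpace ℝ X] (e : ℕ → X) (C : ℝ) : Prop :=
  ∀ (A B : Finset ℕ) (ε ε' : ℕ → ℝ) (c : ℕ →₀ ℝ), A.card = B.card → Disjoint A B →
    (∀ n ∈ A, ε n = 1 ∨ ε n = -1) → (∀ n ∈ B, ε' n = 1 ∨ ε' n = -1) →
    (∀ n, |c n| ≤ 1) → Disjoint c.support (A ∪ B) →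
    ‖vec e c + ∑ n ∈ A, ε n • e n‖ ≤ C * ‖vec e c + ∑ n ∈ B, ε' n • e n‖

section Aux

variable {X : Type*} [NormedAddCommGroup X] [NormedSpace ℝ X]

lemma vec_eq_sum (e : ℕ → X) (u : ℕ →₀ ℝ) {S : Finset ℕ} (h : u.support ⊆ S) :
    vec e u = ∑ n ∈ S, u n • e n := by
  refine Finset.sum_subset h fun n _ hn => ?_
  simp [Finsupp.notMem_support_iff.mp hn]

lemma vec_add (e : ℕ → X) (a b : ℕ →₀ ℝ) : vec e (a + b) = vec e a + vec e b := by
  rw [vec_eq_sum e (a+b) (Finsupp.support_add),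
    vec_eq_sum e a (Finset.subset_union_left (s₂ := b.support)),
    vec_eq_sum e b (Finset.subset_union_right (s₁ := a.support)),
    ← Finset.sum_add_distrib]
  exact Finset.sum_congr rfl fun n _ => by simp [add_smul]

lemma vec_smul (e : ℕ → X) (t : ℝ) (u : ℕ →₀ ℝ) : vec e (t • u) = t • vec e u := by
  rw [vec_eq_sum e (t • u) (Finsupp.support_smul), vec, Finset.smul_sum]
  exact Finset.sum_congr rfl fun n _ => by simp [smul_smul]

lemma f_vec (e : ℕ → X) (f : ℕ → X →L[ℝ] ℝ)
    (hbi : ∀ m n : ℕ, f m (e n) = if m = n then 1 else 0) (u : ℕ →₀ ℝ) (m : ℕ) :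
    f m (vec e u) = u m := by
  rw [vec, map_sum]
  have : ∀ n ∈ u.support, f m (u n • e n) = if n = m then u m else 0 := by
    intro n _
    rw [map_smul, hbi m n]
    by_cases h : n = m
    · simp [h]
    · simp only [if_neg h]; rw [if_neg (fun hh : m = n => h hh.symm)]; simp
  rw [Finset.sum_congr rfl this, Finset.sum_ite_eq' u.support m (fun _ => u m)]
  by_cases h : m ∈ u.support
  · simp [h]
  · simp [h, Finsupp.notMem_support_iff.mp h]

lemma norm_add_smul_le' (v w : X) {r : ℝ} (h : |r| ≤ 1) :
    ‖v + r • w‖ ≤ max ‖v + w‖ ‖v - w‖ := by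
  have h1 : -1 ≤ r := (abs_le.mp h).1
  have h2 : r ≤ 1 := (abs_le.mp h).2
  have key : v + r • w = ((1+r)/2) • (v + w) + ((1-r)/2) • (v - w) := by module
  calc ‖v + r • w‖ = ‖((1+r)/2) • (v + w) + ((1-r)/2) • (v - w)‖ := by rw [key]
    _ ≤ ‖((1+r)/2) • (v + w)‖ + ‖((1-r)/2) • (v - w)‖ := norm_add_le _ _
    _ = ((1+r)/2) * ‖v + w‖ + ((1-r)/2) * ‖v - w‖ := by
        rw [norm_smul, norm_smul, Real.norm_eq_abs, Real.norm_eq_abs,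
          abs_of_nonneg (by linarith), abs_of_nonneg (by linarith)]
    _ ≤ ((1+r)/2) * max ‖v + w‖ ‖v - w‖ + ((1-r)/2) * max ‖v + w‖ ‖v - w‖ := by
        gcongr
        · linarith
        · exact le_max_left _ _
        · exact le_max_right _ _
    _ = max ‖v + w‖ ‖v - w‖ := by ring

lemma exists_signs (e : ℕ → X) (z : ℕ → ℝ) (hz : ∀ n, |z n| ≤ 1) (S : Finset ℕ) :
    ∀ (u : X), ∃ ε : ℕ → ℝ, (∀ n ∈ S, ε n = 1 ∨ ε n = -1) ∧
      ‖u + ∑ n ∈ S, z n • e n‖ ≤ ‖u + ∑ n ∈ S, ε n • e n‖ := by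
  induction S using Finset.induction_on with
  | empty => exact fun u => ⟨fun _ => 1, by simp⟩
  | insert a s ha ih =>
    intro u
    obtain ⟨ε, hε, hle⟩ := ih (u + z a • e a)
    have key : ‖u + ∑ n ∈ insert a s, z n • e n‖ ≤
        ‖(u + ∑ n ∈ s, ε n • e n) + z a • e a‖ := by
      rw [Finset.sum_insert ha]
      calc ‖u + (z a • e a + ∑ n ∈ s, z n • e n)‖
          = ‖(u + z a • e a) + ∑ n ∈ s, z n • e n‖ := by rw [add_assoc]
        _ ≤ ‖(u + z a • e a) + ∑ n ∈ s, ε n • e n‖ := hle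
        _ = ‖(u + ∑ n ∈ s, ε n • e n) + z a • e a‖ := by congr 1; abel
    have hmax := norm_add_smul_le' (u + ∑ n ∈ s, ε n • e n) (e a) (hz a)
    set v := u + ∑ n ∈ s, ε n • e n with hv
    have main : ∀ t : ℝ, t = 1 ∨ t = -1 → ‖v + z a • e a‖ ≤ ‖v + t • e a‖ →
        ∃ ε' : ℕ → ℝ, (∀ n ∈ insert a s, ε' n = 1 ∨ ε' n = -1) ∧
        ‖u + ∑ n ∈ insert a s, z n • e n‖ ≤ ‖u + ∑ n ∈ insert a s, ε' n • e n‖ := by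
      intro t ht hle'
      refine ⟨Function.update ε a t, ?_, ?_⟩
      · intro n hn
        rcases Finset.mem_insert.mp hn with rfl | hn
        · simpa using ht
        · rw [Function.update_of_ne (fun h : n = a => ha (h ▸ hn))]; exact hε n hn
      · have hsum : ∑ n ∈ insert a s, Function.update ε a t n • e n
            = t • e a + ∑ n ∈ s, ε n • e n := by
          rw [Finset.sum_insert ha, Function.update_self]
          congr 1
          exact Finset.sum_congr rfl fun n hn => by
            rw [Function.update_of_ne (fun h : n = a => ha (h ▸ hn))]
        rw [hsum]
        calc ‖u + ∑ n ∈ insert a s, z n • e n‖ ≤ ‖v + z a • e a‖ := key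
          _ ≤ ‖v + t • e a‖ := hle'
          _ = ‖u + (t • e a + ∑ n ∈ s, ε n • e n)‖ := by rw [hv]; congr 1; abel
    rcases le_total ‖v - e a‖ ‖v + e a‖ with hc | hc
    · exact main 1 (Or.inl rfl) (by rw [one_smul]; exact hmax.trans_eq (max_eq_left hc))
    · refine main (-1) (Or.inr rfl) ?_
      have : v + (-1 : ℝ) • e a = v - e a := by module
      rw [this]; exact hmax.trans_eq (max_eq_right hc)

end Aux

/-- Remark 1.5: Property (Q*) with constant `C` implies `C`-suppression unconditionality and
Property (A) with constant `C`; conversely, `K`-suppression unconditionality together with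
Property (A) with constant `C` implies Property (Q*) with constant `KC`. -/
theorem stmt_15 {X : Type*} [NormedAddCommGroup X] [NormedSpace ℝ X] [CompleteSpace X]
    (e : ℕ → X) (f : ℕ → X →L[ℝ] ℝ)
    (hbi : ∀ m n : ℕ, f m (e n) = if m = n then 1 else 0)
    (hexp : ∀ z : X, Tendsto (fun N => ∑ n ∈ Finset.range N, f n z • e n) atTop (nhds z))
    (C K : ℝ) :
    (PropQstar e C →
      (∀ (z : X) (M : Finset ℕ), ‖∑ n ∈ M, f n z • e n‖ ≤ C * ‖z‖) ∧ PropA e C) ∧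
    ((∀ (z : X) (M : Finset ℕ), ‖∑ n ∈ M, f n z • e n‖ ≤ K * ‖z‖) → PropA e C →
      PropQstar e (K * C)) := by
  constructor
  · intro hQ
    -- L1: core suppression inequality for finitely supported vectors
    have L1 : ∀ (c y : ℕ →₀ ℝ), Disjoint c.support y.support →
        ‖vec e c‖ ≤ C * ‖vec e c + vec e y‖ := by
      intro c y hd
      set S := ∑ n ∈ c.support, |c n| with hSdef
      have hS : 0 ≤ S := Finset.sum_nonneg fun n _ => abs_nonneg _
      set t := (1 + S)⁻¹ with htdef
      have ht : 0 < t := inv_pos.mpr (by linarith)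
      have hbound : ∀ n, |(t • c) n| ≤ 1 := by
        intro n
        have h1 : |c n| ≤ 1 + S := by
          by_cases hn : n ∈ c.support
          · have := Finset.single_le_sum (f := fun n => |c n|)
              (fun i _ => abs_nonneg _) hn
            linarith
          · rw [Finsupp.notMem_support_iff.mp hn]; simp; linarith
        calc |(t • c) n| = t * |c n| := by
              rw [Finsupp.smul_apply, smul_eq_mul, abs_mul, abs_of_pos ht]
          _ ≤ t * (1 + S) := by
              exact mul_le_mul_of_nonneg_left h1 ht.le
          _ = 1 := inv_mul_cancel₀ (by linarith)
      have hd2' : Disjoint (t • c).support (t • y).support :=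
        (hd.mono_left Finsupp.support_smul).mono_right Finsupp.support_smul
      have h0 := hQ (t • c) 0 (t • y) (by simp) hd2' (by simp) hbound (by simp) (by simp)
      rw [vec_smul, vec_smul] at h0
      have hvec0 : vec e (0 : ℕ →₀ ℝ) = 0 := by simp [vec]
      rw [hvec0, add_zero, ← smul_add, norm_smul, norm_smul, Real.norm_eq_abs,
        abs_of_pos ht] at h0
      have h0' : t * ‖vec e c‖ ≤ t * (C * ‖vec e c + vec e y‖) := by
        calc t * ‖vec e c‖ ≤ C * (t * ‖vec e c + vec e y‖) := h0
          _ = t * (C * ‖vec e c + vec e y‖) := by ring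
      exact (mul_le_mul_iff_right₀ ht).mp h0'
    -- L2: finitary suppression
    have L2 : ∀ (u : ℕ →₀ ℝ) (M : Finset ℕ),
        ‖∑ n ∈ M, u n • e n‖ ≤ C * ‖vec e u‖ := by
      intro u M
      classical
      set c := u.filter (· ∈ M) with hcdef
      set y := u.filter (fun n => ¬ n ∈ M) with hydef
      have hcy : c + y = u := by
        ext n
        by_cases hn : n ∈ M <;> simp [hcdef, hydef, Finsupp.filter_apply, hn]
      have hdisj : Disjoint c.support y.support := by
        rw [Finset.disjoint_left]
        intro n hnc hny
        rw [hcdef, Finsupp.support_filter, Finset.mem_filter] at hnc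
        rw [hydef, Finsupp.support_filter, Finset.mem_filter] at hny
        exact hny.2 hnc.2
      have hsub : c.support ⊆ M := by
        intro n hn
        rw [hcdef, Finsupp.support_filter, Finset.mem_filter] at hn
        exact hn.2
      calc ‖∑ n ∈ M, u n • e n‖ = ‖vec e c‖ := by
            rw [vec_eq_sum e c hsub]
            congr 1
            exact Finset.sum_congr rfl fun n hn => by
              simp [hcdef, Finsupp.filter_apply, hn]
        _ ≤ C * ‖vec e c + vec e y‖ := L1 c y hdisj
        _ = C * ‖vec e u‖ := by rw [← vec_add, hcy]
    constructor
    · -- suppression unconditionality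
      intro z M
      classical
      have hev : ∀ᶠ N in atTop,
          ‖∑ n ∈ M, f n z • e n‖ ≤ C * ‖∑ n ∈ Finset.range N, f n z • e n‖ := by
        rw [eventually_atTop]
        refine ⟨(M.sup id) + 1, fun N hN => ?_⟩
        have hMN : M ⊆ Finset.range N := by
          intro n hn
          rw [Finset.mem_range]
          have : n ≤ M.sup id := Finset.le_sup (f := id) hn
          omega
        set uN : ℕ →₀ ℝ := Finsupp.onFinset (Finset.range N)
          (fun n => if n ∈ Finset.range N then f n z else 0)
          (fun n h => by by_contra hc; exact h (if_neg hc)) with huN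
        have h1 : vec e uN = ∑ n ∈ Finset.range N, f n z • e n := by
          rw [vec_eq_sum e uN Finsupp.support_onFinset_subset]
          exact Finset.sum_congr rfl fun n hn => by
            simp only [huN, Finsupp.onFinset_apply, if_pos hn]
        have h2 : ∑ n ∈ M, uN n • e n = ∑ n ∈ M, f n z • e n :=
          Finset.sum_congr rfl fun n hn => by
            simp only [huN, Finsupp.onFinset_apply, if_pos (hMN hn)]
        rw [← h2, ← h1]
        exact L2 uN M
      have hlim : Tendsto (fun N => C * ‖∑ n ∈ Finset.range N, f n z • e n‖)
          atTop (nhds (C * ‖z‖)) := ((hexp z).norm).const_mul C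
      exact ge_of_tendsto hlim hev
    · -- Property (A)
      intro A B ε ε' c hcard hAB hεA hεB hc hd
      classical
      set zf : ℕ →₀ ℝ := Finsupp.onFinset A (fun n => if n ∈ A then ε n else 0)
        (fun n h => by by_contra hc'; exact h (if_neg hc')) with hzf
      set yf : ℕ →₀ ℝ := Finsupp.onFinset B (fun n => if n ∈ B then ε' n else 0)
        (fun n h => by by_contra hc'; exact h (if_neg hc')) with hyf
      have hzsupp : zf.support = A := by
        ext n
        rw [Finsupp.mem_support_iff]
        by_cases hn : n ∈ A
        · rcases hεA n hn with h | h <;> simp [hzf, hn, h]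
        · simp [hzf, hn]
      have hysupp : yf.support = B := by
        ext n
        rw [Finsupp.mem_support_iff]
        by_cases hn : n ∈ B
        · rcases hεB n hn with h | h <;> simp [hyf, hn, h]
        · simp [hyf, hn]
      have hvz : vec e zf = ∑ n ∈ A, ε n • e n := by
        rw [vec, hzsupp]
        exact Finset.sum_congr rfl fun n hn => by simp [hzf, hn]
      have hvy : vec e yf = ∑ n ∈ B, ε' n • e n := by
        rw [vec, hysupp]
        exact Finset.sum_congr rfl fun n hn => by simp [hyf, hn]
      have hzb : ∀ n, |zf n| ≤ 1 := by
        intro n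
        by_cases hn : n ∈ A
        · rcases hεA n hn with h | h <;> simp [hzf, hn, h]
        · simp [hzf, hn]
      have hfilter : (yf.support.filter fun n => |yf n| = 1) = B := by
        rw [hysupp]
        refine Finset.filter_true_of_mem fun n hn => ?_
        rcases hεB n hn with h | h <;> simp [hyf, hn, h]
      have := hQ c zf yf
        (by rw [hzsupp]; exact hd.mono_right (Finset.subset_union_left))
        (by rw [hysupp]; exact hd.mono_right (Finset.subset_union_right))
        (by rw [hzsupp, hysupp]; exact hAB) hc hzb
        (by rw [hzsupp, hfilter]; exact hcard.le)
      rwa [hvz, hvy] at this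
  · -- converse
    intro hK hA
    intro c z y hd1 hd2 hd3 hc hz hcard
    classical
    -- C is nonnegative
    have h10 : f 0 (e 0) = 1 := by simpa using hbi 0 0
    have he0 : e 0 ≠ 0 := by
      intro h
      rw [h, map_zero] at h10
      exact zero_ne_one h10
    have hC : 0 ≤ C := by
      have hpa := hA ∅ ∅ (fun _ => 1) (fun _ => 1) (Finsupp.single 0 1) rfl
        (by simp) (by simp) (by simp)
        (by intro n; by_cases h : (0:ℕ) = n <;> simp [Finsupp.single_apply, h]) (by simp)
      have hvs : vec e (Finsupp.single 0 1) = e 0 := by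
        rw [vec, Finsupp.support_single_ne_zero 0 one_ne_zero]
        simp
      rw [Finset.sum_empty, add_zero, hvs] at hpa
      have hp : 0 < ‖e 0‖ := norm_pos_iff.mpr he0
      nlinarith
    -- choose B' ⊆ {n ∈ supp y : |y n| = 1} of the right cardinality
    obtain ⟨B', hB'sub, hB'card⟩ :=
      Finset.exists_subset_card_eq hcard
    -- signs dominating z
    obtain ⟨ε, hεs, hεle⟩ := exists_signs e (fun n => z n) hz z.support (vec e c)
    have step1 : ‖vec e c + vec e z‖ ≤ ‖vec e c + ∑ n ∈ z.support, ε n • e n‖ := hεle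
    have hB'y : ∀ n ∈ B', y n = 1 ∨ y n = -1 := by
      intro n hn
      have h := hB'sub hn
      rw [Finset.mem_filter] at h
      exact (abs_eq one_pos.le).mp h.2
    have hB'suby : B' ⊆ y.support := hB'sub.trans (Finset.filter_subset _ _)
    have step2 := hA z.support B' ε (fun n => y n) c hB'card.symm
      (hd3.mono_right hB'suby) hεs hB'y hc
      (Finset.disjoint_union_right.mpr ⟨hd1, hd2.mono_right hB'suby⟩)
    have step3 : ‖vec e c + ∑ n ∈ B', y n • e n‖ ≤ K * ‖vec e c + vec e y‖ := by
      have hw := hK (vec e c + vec e y) (c.support ∪ B')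
      have heq : ∑ n ∈ c.support ∪ B', f n (vec e c + vec e y) • e n
          = vec e c + ∑ n ∈ B', y n • e n := by
        have hf : ∀ n, f n (vec e c + vec e y) = c n + y n := fun n => by
          rw [map_add, f_vec e f hbi, f_vec e f hbi]
        rw [Finset.sum_congr rfl fun n _ => by rw [hf n, add_smul],
          Finset.sum_add_distrib]
        congr 1
        · exact (vec_eq_sum e c Finset.subset_union_left).symm
        · symm
          apply Finset.sum_subset Finset.subset_union_right
          intro n hn hnB
          have hnc : n ∈ c.support := by
            rcases Finset.mem_union.mp hn with h | h
            · exact h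
            · exact absurd h hnB
          have hny : n ∉ y.support := Finset.disjoint_left.mp hd2 hnc
          rw [Finsupp.notMem_support_iff.mp hny, zero_smul]
      rw [heq] at hw
      exact hw
    calc ‖vec e c + vec e z‖ ≤ ‖vec e c + ∑ n ∈ z.support, ε n • e n‖ := step1
      _ ≤ C * ‖vec e c + ∑ n ∈ B', y n • e n‖ := step2
      _ ≤ C * (K * ‖vec e c + vec e y‖) := mul_le_mul_of_nonneg_left step3 hC
      _ = K * C * ‖vec e c + vec e y‖ := by ring
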